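/- Fix θ ∈ ℝ^p with θ_j ≠ 0 for all j, λ > 0, σ² ≥ 0, and a positive integer n_e. Let (e_{ij})_{1≤i≤n_e, 1≤j≤p} be a jointly independent family of real Gaussian random variables with e_{ij} ~ N(0, λ|θ_j|^{−1} + σ²). Then the PANDA expected penalty satisfies E[ ∑_{i=1}^{n_e} ( ∑_{j=1}^p θ_j e_{ij} )² ] = λ n_e ∑_{j=1}^p |θ_j| + σ² n_e ∑_{j=1}^p θ_j², i.e. the elastic-net penalty. -/

import Mathlib

open MeasureTheory ProbabilityTheory
open scoped ProbabilityTheory NNReal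

open Real Set
open scoped ENNReal

lemma integral_sq_mul_exp_neg_mul_sq {b : ℝ} (hb : 0 < b) :
    ∫ x : ℝ, x ^ 2 * Real.exp (-b * x ^ 2) = b ^ (-(3:ℝ)/2) * (Real.sqrt π / 2) := by
  have h1 : ∀ x : ℝ, x ^ 2 * Real.exp (-b * x ^ 2)
      = |x| ^ 2 * Real.exp (-b * |x| ^ 2) := by
    intro x; rw [sq_abs]
  calc ∫ x : ℝ, x ^ 2 * Real.exp (-b * x ^ 2)
      = ∫ x : ℝ, |x| ^ 2 * Real.exp (-b * |x| ^ 2) := by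
        exact integral_congr_ae (Filter.Eventually.of_forall h1)
    _ = 2 * ∫ x in Ioi (0:ℝ), x ^ 2 * Real.exp (-b * x ^ 2) :=
        integral_comp_abs (f := fun x => x ^ 2 * Real.exp (-b * x ^ 2))
    _ = 2 * ∫ x in Ioi (0:ℝ), x ^ (2:ℝ) * Real.exp (-b * x ^ (2:ℝ)) := by
        congr 1
        refine setIntegral_congr_fun measurableSet_Ioi (fun x hx => ?_)
        rw [show (2:ℝ) = ((2:ℕ):ℝ) by norm_num, Real.rpow_natCast]
    _ = 2 * (b ^ (-((2:ℝ) + 1) / 2) * (1 / 2) * Real.Gamma (((2:ℝ) + 1) / 2)) := by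
        rw [integral_rpow_mul_exp_neg_mul_rpow two_pos (by norm_num) hb]
    _ = b ^ (-(3:ℝ)/2) * (Real.sqrt π / 2) := by
        have : Real.Gamma (((2:ℝ) + 1) / 2) = (1/2) * Real.sqrt π := by
          rw [show ((2:ℝ) + 1) / 2 = 1/2 + 1 by norm_num,
            Real.Gamma_add_one (by norm_num), Real.Gamma_one_half_eq]
        rw [this]; ring_nf

lemma gaussianPDFReal_zero_eq {v : ℝ≥0} :
    gaussianPDFReal 0 v = fun x => (Real.sqrt (2 * π * v))⁻¹
      * Real.exp (-(2*(v:ℝ))⁻¹ * x ^ 2) := by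
  funext x
  rw [gaussianPDFReal, sub_zero]
  ring_nf

lemma gaussianReal_withDensity {v : ℝ≥0} (hv : v ≠ 0) :
    gaussianReal 0 v
      = volume.withDensity (fun x => ((gaussianPDFReal 0 v x).toNNReal : ℝ≥0∞)) := by
  rw [gaussianReal_of_var_ne_zero _ hv]; rfl

lemma integral_gaussianReal_eq {v : ℝ≥0} (hv : v ≠ 0) (g : ℝ → ℝ) :
    ∫ x, g x ∂(gaussianReal 0 v) = ∫ x, gaussianPDFReal 0 v x * g x := by
  have fmeas : Measurable fun x => (gaussianPDFReal 0 v x).toNNReal :=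
    measurable_real_toNNReal.comp (measurable_gaussianPDFReal 0 v)
  rw [gaussianReal_withDensity hv, integral_withDensity_eq_integral_smul fmeas g]
  refine integral_congr_ae (Filter.Eventually.of_forall fun x => ?_)
  simp only [NNReal.smul_def, Real.coe_toNNReal _ (gaussianPDFReal_nonneg 0 v x), smul_eq_mul]

lemma integrable_sq_gaussianReal (v : ℝ≥0) :
    Integrable (fun x : ℝ => x ^ 2) (gaussianReal 0 v) := by
  rcases eq_or_ne v 0 with rfl | hv
  · rw [gaussianReal_zero_var]
    have heq : (fun x : ℝ => x ^ 2) =ᵐ[Measure.dirac (0:ℝ)] fun _ => (0:ℝ) := by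
      rw [Filter.EventuallyEq, MeasureTheory.ae_dirac_eq]
      simp
    exact (integrable_const (0:ℝ)).congr heq.symm
  · set b : ℝ := (2*(v:ℝ))⁻¹ with hbdef
    have hv0 : (0:ℝ) < (v:ℝ) := by exact_mod_cast hv.bot_lt
    have hb : 0 < b := by rw [hbdef]; positivity
    have base : Integrable (fun x : ℝ => x ^ 2 * Real.exp (-b * x ^ 2)) := by
      have h := integrable_rpow_mul_exp_neg_mul_sq hb (by norm_num : (-1:ℝ) < 2)
      have heq : (fun x : ℝ => x ^ (2:ℝ) * Real.exp (-b * x ^ 2))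
          = fun x : ℝ => x ^ 2 * Real.exp (-b * x ^ 2) := by
        funext x
        rw [show (2:ℝ) = ((2:ℕ):ℝ) by norm_num, Real.rpow_natCast]
      rwa [heq] at h
    have fmeas : Measurable fun x => (gaussianPDFReal 0 v x).toNNReal :=
      measurable_real_toNNReal.comp (measurable_gaussianPDFReal 0 v)
    rw [gaussianReal_withDensity hv, integrable_withDensity_iff_integrable_smul fmeas]
    refine ((base.const_mul ((Real.sqrt (2 * π * v))⁻¹)).congr ?_)
    refine Filter.Eventually.of_forall fun x => ?_
    simp only [NNReal.smul_def, smul_eq_mul]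
    rw [Real.coe_toNNReal _ (gaussianPDFReal_nonneg 0 v x), gaussianPDFReal_zero_eq]
    ring

lemma gaussianPDFReal_zero_even (v : ℝ≥0) (x : ℝ) :
    gaussianPDFReal 0 v (-x) = gaussianPDFReal 0 v x := by
  simp [gaussianPDFReal, sub_zero, neg_sq]

lemma integral_id_gaussianReal (v : ℝ≥0) : ∫ x, x ∂(gaussianReal 0 v) = 0 := by
  rcases eq_or_ne v 0 with rfl | hv
  · rw [gaussianReal_zero_var]
    simp [integral_dirac]
  · rw [integral_gaussianReal_eq hv]
    have key : ∫ x : ℝ, gaussianPDFReal 0 v x * x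
        = - ∫ x : ℝ, gaussianPDFReal 0 v x * x := by
      conv_lhs => rw [← integral_neg_eq_self (fun x => gaussianPDFReal 0 v x * x) volume]
      rw [← integral_neg]
      refine integral_congr_ae (Filter.Eventually.of_forall fun x => ?_)
      simp only [gaussianPDFReal_zero_even]
      ring
    linarith [key]

lemma integral_sq_gaussianReal (v : ℝ≥0) :
    ∫ x, x ^ 2 ∂(gaussianReal 0 v) = (v : ℝ) := by
  rcases eq_or_ne v 0 with rfl | hv
  · rw [gaussianReal_zero_var]
    simp [integral_dirac]
  · have hv0 : (0:ℝ) < (v:ℝ) := by exact_mod_cast hv.bot_lt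
    set c : ℝ := 2*(v:ℝ) with hc
    have hc0 : (0:ℝ) < c := by positivity
    have hb : (0:ℝ) < c⁻¹ := by positivity
    rw [integral_gaussianReal_eq hv]
    have h1 : ∀ x:ℝ, gaussianPDFReal 0 v x * x ^ 2
        = (Real.sqrt (2*π*v))⁻¹ * (x ^ 2 * Real.exp (-c⁻¹ * x ^ 2)) := fun x => by
      rw [gaussianPDFReal_zero_eq]; ring
    have h2 : (c⁻¹ : ℝ) ^ (-(3:ℝ)/2) = c ^ ((3:ℝ)/2) := by
      rw [Real.inv_rpow hc0.le, show (-(3:ℝ)/2) = -((3:ℝ)/2) by norm_num,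
        Real.rpow_neg hc0.le, inv_inv]
    have h3 : Real.sqrt (2*π*(v:ℝ)) = Real.sqrt π * c ^ ((1:ℝ)/2) := by
      rw [show 2*π*(v:ℝ) = π * c by rw [hc]; ring, Real.sqrt_mul pi_pos.le,
        Real.sqrt_eq_rpow c]
    have h4 : c ^ ((3:ℝ)/2) = c ^ ((1:ℝ)/2) * c := by
      have h := Real.rpow_add hc0 ((1:ℝ)/2) 1
      rw [Real.rpow_one] at h
      rw [show (3:ℝ)/2 = (1:ℝ)/2 + 1 by norm_num, h]
    have hπ : (0:ℝ) < Real.sqrt π := Real.sqrt_pos.mpr pi_pos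
    have hcp : (0:ℝ) < c ^ ((1:ℝ)/2) := Real.rpow_pos_of_pos hc0 _
    calc ∫ x : ℝ, gaussianPDFReal 0 v x * x ^ 2
        = (Real.sqrt (2*π*v))⁻¹ * ∫ x : ℝ, x ^ 2 * Real.exp (-c⁻¹ * x ^ 2) := by
          simp_rw [h1]; rw [integral_const_mul]
      _ = (Real.sqrt (2*π*v))⁻¹ * (c⁻¹ ^ (-(3:ℝ)/2) * (Real.sqrt π / 2)) := by
          rw [integral_sq_mul_exp_neg_mul_sq hb]
      _ = (v : ℝ) := by
          rw [h2, h3, h4]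
          field_simp
          rw [hc]

lemma memLp_two_id_gaussianReal (v : ℝ≥0) :
    MemLp (fun x : ℝ => x) 2 (gaussianReal 0 v) :=
  (memLp_two_iff_integrable_sq aestronglyMeasurable_id).mpr (integrable_sq_gaussianReal v)

/-- Elastic-net row of Table 1: with noise e_{ij} ~ N(0, λ|θ_j|⁻¹ + σ²), the
expected PANDA penalty is the elastic-net penalty λn_e∑|θ_j| + σ²n_e∑θ_j². -/
theorem stmt_5 {Ω : Type*} [MeasureSpace Ω] [IsProbabilityMeasure (ℙ : Measure Ω)]
    {p nE : ℕ} (hnE : 0 < nE) (θ : Fin p → ℝ) (hθ : ∀ j, θ j ≠ 0)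
    (lam σ2 : ℝ) (hlam : 0 < lam) (hσ2 : 0 ≤ σ2)
    (e : Fin nE → Fin p → Ω → ℝ) (hmeas : ∀ i j, Measurable (e i j))
    (hindep : iIndepFun
      (fun ij : Fin nE × Fin p => e ij.1 ij.2) ℙ)
    (v : Fin p → ℝ≥0) (hv : ∀ j, (v j : ℝ) = lam * |θ j|⁻¹ + σ2)
    (hgauss : ∀ i j, Measure.map (e i j) ℙ = gaussianReal 0 (v j)) :
    (∫ ω, ∑ i, (∑ j, θ j * e i j ω) ^ 2 ∂ℙ)
      = lam * nE * (∑ j, |θ j|) + σ2 * nE * ∑ j, θ j ^ 2 := by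
  have hX2 : ∀ i j, MemLp (e i j) 2 ℙ := by
    intro i j
    have h := memLp_two_id_gaussianReal (v j)
    rw [← hgauss i j] at h
    have h2 := (memLp_map_measure_iff aestronglyMeasurable_id
      (hmeas i j).aemeasurable).mp h
    simpa [Function.id_comp] using h2
  have hInt1 : ∀ i j, Integrable (e i j) ℙ := fun i j => (hX2 i j).integrable one_le_two
  have hIntMul : ∀ i j k, Integrable (fun ω => e i j ω * e i k ω) ℙ := by
    intro i j k
    rcases eq_or_ne j k with rfl | hjk
    · exact ((hX2 i j).integrable_sq).congr
        (Filter.Eventually.of_forall fun ω => by ring)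
    · have hind : IndepFun (e i j) (e i k) ℙ :=
        hindep.indepFun (show ((i,j) : Fin nE × Fin p) ≠ (i,k) by
          simp [Prod.ext_iff, hjk])
      have h := hind.integrable_mul (hInt1 i j) (hInt1 i k)
      exact h.congr (Filter.Eventually.of_forall fun ω => rfl)
  have hMean : ∀ i j, ∫ ω, e i j ω ∂ℙ = 0 := by
    intro i j
    have h : ∫ x, x ∂(Measure.map (e i j) ℙ) = ∫ ω, e i j ω ∂ℙ :=
      integral_map (hmeas i j).aemeasurable aestronglyMeasurable_id
    rw [hgauss i j, _root_.integral_id_gaussianReal] at h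
    exact h.symm
  have hCov : ∀ i j k, (∫ ω, e i j ω * e i k ω ∂ℙ)
      = if j = k then (v j : ℝ) else 0 := by
    intro i j k
    rcases eq_or_ne j k with rfl | hjk
    · rw [if_pos rfl]
      have h : ∫ x, x ^ 2 ∂(Measure.map (e i j) ℙ) = ∫ ω, (e i j ω) ^ 2 ∂ℙ :=
        integral_map (hmeas i j).aemeasurable
          (measurable_id.pow_const 2).aestronglyMeasurable
      rw [hgauss i j, integral_sq_gaussianReal] at h
      rw [h]
      exact integral_congr_ae (Filter.Eventually.of_forall fun ω => by ring)
    · have hind : IndepFun (e i j) (e i k) ℙ :=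
        hindep.indepFun (show ((i,j) : Fin nE × Fin p) ≠ (i,k) by
          simp [Prod.ext_iff, hjk])
      have h := hind.integral_mul_eq_mul_integral (hmeas i j).aestronglyMeasurable
        (hmeas i k).aestronglyMeasurable
      rw [if_neg hjk]
      have h2 : ∫ ω, e i j ω * e i k ω ∂ℙ
          = (∫ ω, e i j ω ∂ℙ) * ∫ ω, e i k ω ∂ℙ := h
      rw [h2, hMean i j, zero_mul]
  have expand : ∀ ω, (∑ i, (∑ j, θ j * e i j ω) ^ 2)
      = ∑ i, ∑ j, ∑ k, (θ j * θ k) * (e i j ω * e i k ω) := by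
    intro ω
    refine Finset.sum_congr rfl fun i _ => ?_
    rw [sq, Finset.sum_mul_sum]
    exact Finset.sum_congr rfl fun j _ => Finset.sum_congr rfl fun k _ => by ring
  have hterm : ∀ j, (θ j * θ j) * (v j : ℝ) = lam * |θ j| + σ2 * θ j ^ 2 := by
    intro j
    rw [hv j]
    have habs : θ j * θ j = |θ j| * |θ j| := (abs_mul_abs_self _).symm
    have hne : |θ j| ≠ 0 := abs_ne_zero.mpr (hθ j)
    have h1 : θ j * θ j * (lam * |θ j|⁻¹) = lam * |θ j| := by
      rw [habs]; field_simp
    rw [mul_add, h1]; ring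
  calc (∫ ω, ∑ i, (∑ j, θ j * e i j ω) ^ 2 ∂ℙ)
      = ∫ ω, ∑ i, ∑ j, ∑ k, (θ j * θ k) * (e i j ω * e i k ω) ∂ℙ :=
        integral_congr_ae (Filter.Eventually.of_forall expand)
    _ = ∑ i, ∑ j, ∑ k, (θ j * θ k) * ∫ ω, e i j ω * e i k ω ∂ℙ := by
        rw [integral_finset_sum _ fun i _ => integrable_finset_sum _ fun j _ =>
          integrable_finset_sum _ fun k _ => (hIntMul i j k).const_mul _]
        refine Finset.sum_congr rfl fun i _ => ?_
        rw [integral_finset_sum _ fun j _ => integrable_finset_sum _ fun k _ =>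
          (hIntMul i j k).const_mul _]
        refine Finset.sum_congr rfl fun j _ => ?_
        rw [integral_finset_sum _ fun k _ => (hIntMul i j k).const_mul _]
        exact Finset.sum_congr rfl fun k _ => integral_const_mul _ _
    _ = ∑ _i : Fin nE, ∑ j, (θ j * θ j) * (v j : ℝ) := by
        refine Finset.sum_congr rfl fun i _ => Finset.sum_congr rfl fun j _ => ?_
        calc ∑ k, (θ j * θ k) * ∫ ω, e i j ω * e i k ω ∂ℙ
            = ∑ k, if j = k then (θ j * θ j) * (v j : ℝ) else 0 := by
              refine Finset.sum_congr rfl fun k _ => ?_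
              rw [hCov i j k]
              by_cases h : j = k
              · subst h; simp
              · simp [h]
          _ = (θ j * θ j) * (v j : ℝ) := by simp
    _ = (nE : ℝ) * ∑ j, (θ j * θ j) * (v j : ℝ) := by
        rw [Finset.sum_const, Finset.card_univ, Fintype.card_fin, nsmul_eq_mul]
    _ = lam * nE * (∑ j, |θ j|) + σ2 * nE * ∑ j, θ j ^ 2 := by
        rw [Finset.sum_congr rfl fun j _ => hterm j, Finset.sum_add_distrib,
          ← Finset.mul_sum, ← Finset.mul_sum]
        ring
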